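/- General models for CTT_uqe exist: there is a frame and interpretation satisfying all thirteen interpretation conditions on the logical constants together with the seven valuation clauses of a general model. -/

import Mathlib

set_option maxHeartbeats 1000000

namespace CTTuqe

/-- Types of CTT_uqe: base types (0 = o, 1 = ε, n+2 = individuals) and function types. -/
inductive Ty where
  | base : ℕ → Ty
  | arr : Ty → Ty → Ty
deriving DecidableEq

def oTy : Ty := .base 0
def epsTy : Ty := .base 1

/-- Names of constants, including the logical constants of CTT_uqe. -/
inductive CName where
  | eq | iota | isVar | isCon | appc | absc | condc | quo | sub | isFreeIn
  | isVarAt (a : Ty) | isConAt (a : Ty) | isExprAt (a : Ty)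
  | user (n : ℕ)
deriving DecidableEq

/-- Expressions of CTT_uqe. -/
inductive Expr where
  | var : ℕ → Ty → Expr
  | con : CName → Ty → Expr
  | app : Expr → Expr → Expr
  | abs : ℕ → Ty → Expr → Expr
  | cond : Expr → Expr → Expr → Expr
  | quot : Expr → Expr
  | eval : Expr → Expr → Expr
deriving DecidableEq

/-- Eval-free expressions. -/
def EvalFree : Expr → Prop
  | .var _ _ => True
  | .con _ _ => True
  | .app f x => EvalFree f ∧ EvalFree x
  | .abs _ _ b => EvalFree b
  | .cond a b c => EvalFree a ∧ EvalFree b ∧ EvalFree c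
  | .quot a => EvalFree a
  | .eval _ _ => False

/-- Typing judgement for expressions. -/
inductive HasType : Expr → Ty → Prop
  | var (n : ℕ) (a : Ty) : HasType (.var n a) a
  | con (c : CName) (a : Ty) : HasType (.con c a) a
  | app {f x : Expr} {a b : Ty} : HasType f (.arr a b) → HasType x a → HasType (.app f x) b
  | abs {n : ℕ} {a : Ty} {B : Expr} {b : Ty} : HasType B b → HasType (.abs n a B) (.arr a b)
  | cond {A B C : Expr} {a : Ty} : HasType A oTy → HasType B a → HasType C a →
      HasType (.cond A B C) a
  | quot {A : Expr} {a : Ty} : EvalFree A → HasType A a → HasType (.quot A) epsTy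
  | eval {A B : Expr} {b : Ty} : HasType A epsTy → HasType B b → HasType (.eval A B) b

def appC : Expr := .con .appc (epsTy.arr (epsTy.arr epsTy))
def absC : Expr := .con .absc (epsTy.arr (epsTy.arr epsTy))
def condC : Expr := .con .condc (epsTy.arr (epsTy.arr (epsTy.arr epsTy)))
def quoC : Expr := .con .quo (epsTy.arr epsTy)

/-- The mapping 𝓔 from eval-free expressions to expressions of type ε. -/
def E : Expr → Expr
  | .var n a => .quot (.var n a)
  | .con c a => .quot (.con c a)
  | .app f x => .app (.app appC (E f)) (E x)
  | .abs n a b => .app (.app absC (.quot (.var n a))) (E b)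
  | .cond a b c => .app (.app (.app condC (E a)) (E b)) (E c)
  | .quot a => .app quoC (E a)
  | .eval a b => .eval a b

/-- A construction is an expression in the range of 𝓔 (on eval-free expressions). -/
def IsConstruction (e : Expr) : Prop := ∃ A, EvalFree A ∧ E A = e

def Construction := {e : Expr // IsConstruction e}

/-- Free variables of an (eval-free) expression; quotation binds everything. -/
def freeVars : Expr → Finset (ℕ × Ty)
  | .var n a => {(n, a)}
  | .con _ _ => ∅
  | .app f x => freeVars f ∪ freeVars x
  | .abs n a b => freeVars b \ {(n, a)}
  | .cond a b c => freeVars a ∪ freeVars b ∪ freeVars c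
  | .quot _ => ∅
  | .eval a b => freeVars a ∪ freeVars b

/-- Free variables computed as if quotation did not bind anything. -/
def varsThroughQuot : Expr → Finset (ℕ × Ty)
  | .var n a => {(n, a)}
  | .con _ _ => ∅
  | .app f x => varsThroughQuot f ∪ varsThroughQuot x
  | .abs n a b => varsThroughQuot b \ {(n, a)}
  | .cond a b c => varsThroughQuot a ∪ varsThroughQuot b ∪ varsThroughQuot c
  | .quot a => varsThroughQuot a
  | .eval a b => varsThroughQuot a ∪ varsThroughQuot b

/-- All variables occurring in an expression (free or bound, through quotations). -/
def allVars : Expr → Finset (ℕ × Ty)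
  | .var n a => {(n, a)}
  | .con _ _ => ∅
  | .app f x => allVars f ∪ allVars x
  | .abs n a b => insert (n, a) (allVars b)
  | .cond a b c => allVars a ∪ allVars b ∪ allVars c
  | .quot a => allVars a
  | .eval a b => allVars a ∪ allVars b

/-- Immediate subexpression relation. -/
inductive DirectSub : Expr → Expr → Prop
  | appF {f x} : DirectSub f (.app f x)
  | appX {f x} : DirectSub x (.app f x)
  | absB {n a b} : DirectSub b (.abs n a b)
  | condA {a b c} : DirectSub a (.cond a b c)
  | condB {a b c} : DirectSub b (.cond a b c)
  | condC {a b c} : DirectSub c (.cond a b c)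
  | quotA {a} : DirectSub a (.quot a)
  | evalA {a b} : DirectSub a (.eval a b)
  | evalB {a b} : DirectSub b (.eval a b)

/-- Proper subexpression relation. -/
def ProperSub : Expr → Expr → Prop := Relation.TransGen DirectSub

/- Logical sugar (Table 3). -/
def eqC (a : Ty) : Expr := .con .eq (a.arr (a.arr oTy))
def eqE (a : Ty) (x y : Expr) : Expr := .app (.app (eqC a) x) y
def trueE : Expr := eqE (oTy.arr (oTy.arr oTy)) (eqC oTy) (eqC oTy)
def falseE : Expr := eqE (oTy.arr oTy) (.abs 0 oTy trueE) (.abs 0 oTy (.var 0 oTy))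
def forallE (n : ℕ) (a : Ty) (body : Expr) : Expr :=
  eqE (a.arr oTy) (.abs n a trueE) (.abs n a body)
def andE (x y : Expr) : Expr :=
  eqE ((oTy.arr (oTy.arr oTy)).arr oTy)
    (.abs 2 (oTy.arr (oTy.arr oTy)) (.app (.app (.var 2 (oTy.arr (oTy.arr oTy))) trueE) trueE))
    (.abs 2 (oTy.arr (oTy.arr oTy)) (.app (.app (.var 2 (oTy.arr (oTy.arr oTy))) x) y))
def impE (x y : Expr) : Expr := eqE oTy x (andE x y)
def notE (x : Expr) : Expr := eqE oTy falseE x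
def orE (x y : Expr) : Expr := notE (andE (notE x) (notE y))
def neqE (a : Ty) (x y : Expr) : Expr := notE (eqE a x y)
def existsE (n : ℕ) (a : Ty) (body : Expr) : Expr := notE (forallE n a (notE body))
def iotaC (a : Ty) : Expr := .con .iota ((a.arr oTy).arr a)
/-- The canonical undefined expression ⊥_α. -/
def bottom : Ty → Expr
  | .base 0 => falseE
  | a => .app (iotaC a) (.abs 0 a (neqE a (.var 0 a) (.var 0 a)))
/-- A↓ -/
def defdE (a : Ty) (x : Expr) : Expr := eqE a x x
/-- A ≃ B -/
def simeqE (a : Ty) (x y : Expr) : Expr := impE (orE (defdE a x) (defdE a y)) (eqE a x y)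
/-- p ⇀ q : λ f. ∀ x. (f x ≠ ⊥ ⊃ (p x ∧ q (f x))) -/
def arrowPred (p q : Expr) (a b : Ty) : Expr :=
  .abs 1 (a.arr b) (forallE 0 a (impE
    (neqE b (.app (.var 1 (a.arr b)) (.var 0 a)) (bottom b))
    (andE (.app p (.var 0 a)) (.app q (.app (.var 1 (a.arr b)) (.var 0 a))))))

/-- The (partial, junk-total) type of an expression. -/
def typeOf : Expr → Ty
  | .var _ a => a
  | .con _ a => a
  | .app f _ => match typeOf f with | .arr _ b => b | t => t
  | .abs _ a b => .arr a (typeOf b)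
  | .cond _ b _ => typeOf b
  | .quot _ => epsTy
  | .eval _ b => typeOf b

/-- τ maps a predicate of type α → o to the type α. -/
def tauOf (p : Expr) : Ty := match typeOf p with | .arr a _ => a | t => t

/- Languages and theories. -/
def TyInSets (bs : Set ℕ) : Ty → Prop
  | .base n => n ∈ bs
  | .arr a b => TyInSets bs a ∧ TyInSets bs b

def ExprInSets (bs : Set ℕ) (cs : Set (CName × Ty)) : Expr → Prop
  | .var _ a => TyInSets bs a
  | .con c a => (c, a) ∈ cs ∧ TyInSets bs a
  | .app f x => ExprInSets bs cs f ∧ ExprInSets bs cs x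
  | .abs _ a b => TyInSets bs a ∧ ExprInSets bs cs b
  | .cond a b c => ExprInSets bs cs a ∧ ExprInSets bs cs b ∧ ExprInSets bs cs c
  | .quot a => ExprInSets bs cs a
  | .eval a b => ExprInSets bs cs a ∧ ExprInSets bs cs b

/-- A theory of CTT_uqe. -/
structure Theory where
  bases : Set ℕ
  consts : Set (CName × Ty)
  axioms : Set Expr
  bases_o : 0 ∈ bases
  bases_eps : 1 ∈ bases
  axioms_lang : ∀ A ∈ axioms, ExprInSets bases consts A ∧ HasType A oTy

def Theory.InLang (T : Theory) (A : Expr) : Prop := ExprInSets T.bases T.consts A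

/- Semantics. -/

/-- The full domains over a choice U of sets of individuals. -/
def FullDom (U : ℕ → Type) : Ty → Type
  | .base 0 => Bool
  | .base 1 => Construction
  | .base (n+2) => U n
  | .arr a b => FullDom U a → Option (FullDom U b)

/-- A frame of CTT_uqe. -/
structure Frame (U : ℕ → Type) where
  dom : (a : Ty) → Set (FullDom U a)
  dom_o : dom (.base 0) = Set.univ
  dom_eps : dom (.base 1) = Set.univ
  dom_ind : ∀ n : ℕ, (dom (.base (n+2))).Nonempty
  fn_mem : ∀ (a b : Ty) (f : FullDom U (a.arr b)), f ∈ dom (a.arr b) →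
      ∀ x ∈ dom a, ∀ y, f x = some y → y ∈ dom b
  fn_total : ∀ (a : Ty) (f : FullDom U (a.arr (.base 0))), f ∈ dom (a.arr (.base 0)) →
      ∀ x ∈ dom a, (f x).isSome

/-- Assignments into a frame. -/
def Assn {U : ℕ → Type} (F : Frame U) := {φ : (n : ℕ) → (a : Ty) → FullDom U a // ∀ n a, φ n a ∈ F.dom a}

def Assn.upd {U : ℕ → Type} {F : Frame U} (φ : Assn F) (n : ℕ) (a : Ty) (d : FullDom U a)
    (hd : d ∈ F.dom a) : Assn F :=
  ⟨fun m b => if h : n = m ∧ a = b then h.2 ▸ d else φ.1 m b, by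
    intro m b
    by_cases h : n = m ∧ a = b
    · simp only [dif_pos h]
      have h2 := h.2
      subst h2
      exact hd
    · simp only [dif_neg h]
      exact φ.2 m b⟩

/-- An interpretation of CTT_uqe, with the thirteen conditions on logical constants. -/
structure Interp (U : ℕ → Type) where
  fr : Frame U
  I : (c : CName) → (a : Ty) → FullDom U a
  I_mem : ∀ c a, I c a ∈ fr.dom a
  eq_cond : ∀ (a : Ty), ∀ x ∈ fr.dom a, ∃ g, I .eq (a.arr (a.arr oTy)) x = some g ∧
      ∀ y ∈ fr.dom a, ∃ b : Bool, g y = some b ∧ (b = true ↔ x = y)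
  iota_cond : ∀ (a : Ty), a ≠ oTy → ∀ p ∈ fr.dom (a.arr oTy),
      (∀ d ∈ fr.dom a, (p d = some true ∧ ∀ d' ∈ fr.dom a, p d' = some true → d' = d) →
        I .iota ((a.arr oTy).arr a) p = some d) ∧
      ((¬ ∃ d ∈ fr.dom a, p d = some true ∧ ∀ d' ∈ fr.dom a, p d' = some true → d' = d) →
        I .iota ((a.arr oTy).arr a) p = none)
  isVar_cond : ∀ A : Construction, ∃ b : Bool, I .isVar (epsTy.arr oTy) A = some b ∧
      (b = true ↔ ∃ (n : ℕ) (a : Ty), A.1 = Expr.quot (.var n a))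
  isVarAt_cond : ∀ (a : Ty) (A : Construction), ∃ b : Bool, I (.isVarAt a) (epsTy.arr oTy) A = some b ∧
      (b = true ↔ ∃ n : ℕ, A.1 = Expr.quot (.var n a))
  isCon_cond : ∀ A : Construction, ∃ b : Bool, I .isCon (epsTy.arr oTy) A = some b ∧
      (b = true ↔ ∃ (c : CName) (a : Ty), A.1 = Expr.quot (.con c a))
  isConAt_cond : ∀ (a : Ty) (A : Construction), ∃ b : Bool, I (.isConAt a) (epsTy.arr oTy) A = some b ∧
      (b = true ↔ ∃ c : CName, A.1 = Expr.quot (.con c a))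
  app_cond : ∀ A B : Construction,
      ((∃ g C, I .appc (epsTy.arr (epsTy.arr epsTy)) A = some g ∧ g B = some C) ↔
        IsConstruction (Expr.app (Expr.app appC A.1) B.1)) ∧
      (∀ g C, I .appc (epsTy.arr (epsTy.arr epsTy)) A = some g → g B = some C →
        C.1 = Expr.app (Expr.app appC A.1) B.1)
  abs_cond : ∀ A B : Construction,
      ((∃ g C, I .absc (epsTy.arr (epsTy.arr epsTy)) A = some g ∧ g B = some C) ↔
        IsConstruction (Expr.app (Expr.app absC A.1) B.1)) ∧
      (∀ g C, I .absc (epsTy.arr (epsTy.arr epsTy)) A = some g → g B = some C →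
        C.1 = Expr.app (Expr.app absC A.1) B.1)
  cond_cond : ∀ A B C : Construction,
      ((∃ g h D, I .condc (epsTy.arr (epsTy.arr (epsTy.arr epsTy))) A = some g ∧ g B = some h ∧
          h C = some D) ↔
        IsConstruction (Expr.app (Expr.app (Expr.app condC A.1) B.1) C.1)) ∧
      (∀ g h D, I .condc (epsTy.arr (epsTy.arr (epsTy.arr epsTy))) A = some g → g B = some h →
        h C = some D → D.1 = Expr.app (Expr.app (Expr.app condC A.1) B.1) C.1)
  quo_cond : ∀ A : Construction, ∃ C : Construction, I .quo (epsTy.arr epsTy) A = some C ∧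
      C.1 = Expr.app quoC A.1
  isExprAt_cond : ∀ (a : Ty) (A : Construction), ∃ b : Bool,
      I (.isExprAt a) (epsTy.arr oTy) A = some b ∧
      (b = true ↔ ∃ B : Expr, EvalFree B ∧ HasType B a ∧ E B = A.1)
  sub_cond : ∀ A B : Construction, ∃ g b, I .sub (epsTy.arr (epsTy.arr oTy)) A = some g ∧
      g B = some b ∧ (b = true ↔ ProperSub A.1 B.1)
  isFreeIn_cond : ∀ A B : Construction, ∃ g b, I .isFreeIn (epsTy.arr (epsTy.arr oTy)) A = some g ∧
      g B = some b ∧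
      (b = true ↔ ∃ (n : ℕ) (a : Ty) (C : Expr), EvalFree C ∧ E C = B.1 ∧
        A.1 = Expr.quot (.var n a) ∧ (n, a) ∈ freeVars C)

/-- For type o, undefinedness falls back to falsehood. -/
def fallback (U : ℕ → Type) : (b : Ty) → Option (FullDom U b) → Option (FullDom U b)
  | .base 0, v => some (v.getD false)
  | _, v => v

/-- A general model of CTT_uqe: an interpretation with a valuation function
satisfying the seven valuation clauses. -/
structure GeneralModel (U : ℕ → Type) where
  intp : Interp U
  V : Assn intp.fr → Expr → (a : Ty) → Option (FullDom U a)
  V_mem : ∀ φ A a y, V φ A a = some y → y ∈ intp.fr.dom a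
  v_var : ∀ φ (n : ℕ) (a : Ty), V φ (.var n a) a = some (φ.1 n a)
  v_con : ∀ φ (c : CName) (a : Ty), V φ (.con c a) a = some (intp.I c a)
  v_app : ∀ φ (F X : Expr) (a b : Ty), HasType F (a.arr b) → HasType X a →
      V φ (.app F X) b =
        fallback U b ((V φ F (a.arr b)).bind fun f => (V φ X a).bind fun x => f x)
  v_abs : ∀ φ (n : ℕ) (a : Ty) (B : Expr) (b : Ty), HasType B b →
      ∃ f, V φ (.abs n a B) (a.arr b) = some f ∧
        ∀ d (hd : d ∈ intp.fr.dom a), f d = V (φ.upd n a d hd) B b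
  v_cond : ∀ φ (A B C : Expr) (a : Ty), HasType A oTy → HasType B a → HasType C a →
      V φ (.cond A B C) a = (V φ A oTy).bind (fun t => bif t then V φ B a else V φ C a)
  v_quot : ∀ φ (A : Expr) (h : EvalFree A), V φ (.quot A) epsTy = some ⟨E A, A, h, rfl⟩
  v_eval_pos : ∀ φ (A B : Expr) (b : Ty) (C : Construction) (D : Expr), EvalFree D →
      HasType D b → V φ A epsTy = some C → E D = C.1 → V φ (.eval A B) b = V φ D b
  v_eval_neg : ∀ φ (A B : Expr) (b : Ty),
      (¬ ∃ (C : Construction) (D : Expr), EvalFree D ∧ HasType D b ∧ V φ A epsTy = some C ∧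
        E D = C.1) →
      V φ (.eval A B) b = fallback U b none

/-- Validity in a general model. -/
def ValidInModel {U : ℕ → Type} (M : GeneralModel U) (A : Expr) : Prop :=
  ∀ φ : Assn M.intp.fr, M.V φ A oTy = some true

/-- M is a general model for the theory T. -/
def ModelOf {U : ℕ → Type} (T : Theory) (M : GeneralModel U) : Prop :=
  ∀ A ∈ T.axioms, ValidInModel M A

/-- Semantically closed: the value does not depend on the assignment, in any general model. -/
def SemClosedExpr (A : Expr) (a : Ty) : Prop :=
  ∀ (U : ℕ → Type) (M : GeneralModel U) (φ ψ : Assn M.intp.fr), M.V φ A a = M.V ψ A a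

/-- Semantically closed relative to a theory. -/
def SemClosedIn (T : Theory) (A : Expr) (a : Ty) : Prop :=
  ∀ (U : ℕ → Type) (M : GeneralModel U), ModelOf T M →
    ∀ φ ψ : Assn M.intp.fr, M.V φ A a = M.V ψ A a

/-- Validity in a theory. -/
def ValidInTheory (T : Theory) (A : Expr) : Prop :=
  ∀ (U : ℕ → Type) (M : GeneralModel U), ModelOf T M → ValidInModel M A

/-- A normal theory: all axioms are semantically closed. -/
def Theory.Normal (T : Theory) : Prop := ∀ A ∈ T.axioms, SemClosedExpr A oTy

/- Translations. -/

def tyTransAux (m : ℕ → Ty) : Ty → Ty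
  | .base 0 => .base 0
  | .base 1 => .base 1
  | .base (n+2) => m (n+2)
  | .arr a b => .arr (tyTransAux m a) (tyTransAux m b)

/-- A translation Φ = (μ, ν) from T₁ to T₂. -/
structure Translation (T₁ T₂ : Theory) where
  muT : ℕ → Ty
  muP : ℕ → Expr
  nuVar : ℕ × Ty → ℕ
  nuCon : CName × Ty → CName
  nuVar_inj : Function.Injective nuVar
  nuCon_inj : Function.Injective nuCon
  muT_lang : ∀ n, 2 ≤ n → TyInSets T₂.bases (muT n)
  muP_lang : ∀ n, 2 ≤ n → ExprInSets T₂.bases T₂.consts (muP n)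
  muP_type : ∀ n, 2 ≤ n → HasType (muP n) ((muT n).arr oTy)
  muP_closed : ∀ n, 2 ≤ n → SemClosedExpr (muP n) ((muT n).arr oTy)
  nuCon_mem : ∀ p ∈ T₁.consts, (nuCon p, tyTransAux muT p.2) ∈ T₂.consts

variable {T₁ T₂ : Theory}

def Translation.tyTrans (Φ : Translation T₁ T₂) : Ty → Ty := tyTransAux Φ.muT

/-- μ on base types (with μ(o), μ(ε) the trivially true predicates). -/
def Translation.muBase (Φ : Translation T₁ T₂) : ℕ → Expr
  | 0 => .abs 0 oTy trueE
  | 1 => .abs 0 epsTy trueE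
  | n+2 => Φ.muP (n+2)

/-- The canonical extension μ̄ of μ to all types. -/
def Translation.muBar (Φ : Translation T₁ T₂) : Ty → Expr
  | .base n => Φ.muBase n
  | .arr a b => arrowPred (Φ.muBar a) (Φ.muBar b) (Φ.tyTrans a) (Φ.tyTrans b)

/-- The canonical extension ν̄ of ν to all expressions. -/
def Translation.nuBar (Φ : Translation T₁ T₂) : Expr → Expr
  | .var n a => .var (Φ.nuVar (n, a)) (Φ.tyTrans a)
  | .con c a => .con (Φ.nuCon (c, a)) (Φ.tyTrans a)
  | .app f x => .app (Φ.nuBar f) (Φ.nuBar x)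
  | .abs n a b => .abs (Φ.nuVar (n, a)) (Φ.tyTrans a)
      (.cond ((Φ.muBar a).app (.var (Φ.nuVar (n, a)) (Φ.tyTrans a)))
        (Φ.nuBar b) (bottom (Φ.tyTrans (typeOf b))))
  | .cond a b c => .cond (Φ.nuBar a) (Φ.nuBar b) (Φ.nuBar c)
  | .quot a => .quot (Φ.nuBar a)
  | .eval a b => .eval (Φ.nuBar a) (Φ.nuBar b)

/-- Obligation 3 of a translation: the interpretation of equality. -/
def eqObligation (Φ : Translation T₁ T₂) (a : Ty) : Expr :=
  eqE ((Φ.tyTrans a).arr ((Φ.tyTrans a).arr oTy))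
    (.con (Φ.nuCon (.eq, a.arr (a.arr oTy))) ((Φ.tyTrans a).arr ((Φ.tyTrans a).arr oTy)))
    (.abs 0 (Φ.tyTrans a) (.abs 1 (Φ.tyTrans a)
      (.cond (andE ((Φ.muBar a).app (.var 0 (Φ.tyTrans a)))
                   ((Φ.muBar a).app (.var 1 (Φ.tyTrans a))))
        (eqE (Φ.tyTrans a) (.var 0 (Φ.tyTrans a)) (.var 1 (Φ.tyTrans a)))
        (bottom oTy))))

/-- Obligation 4 of a translation: the interpretation of definite description. -/
def iotaObligation (Φ : Translation T₁ T₂) (a : Ty) : Expr :=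
  eqE (((Φ.tyTrans a).arr oTy).arr (Φ.tyTrans a))
    (.con (Φ.nuCon (.iota, (a.arr oTy).arr a)) (((Φ.tyTrans a).arr oTy).arr (Φ.tyTrans a)))
    (.abs 0 ((Φ.tyTrans a).arr oTy)
      (.cond ((Φ.muBar (a.arr oTy)).app (.var 0 ((Φ.tyTrans a).arr oTy)))
        (.app (iotaC (Φ.tyTrans a)) (.var 0 ((Φ.tyTrans a).arr oTy)))
        (bottom (Φ.tyTrans a))))

/-- Obligations 5/6: ν(c) = c for syntactic logical constants. -/
def synConstObligation (Φ : Translation T₁ T₂) (c c' : CName) (t : Ty) : Expr :=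
  eqE t (.con (Φ.nuCon (c, t)) t) (.con c' t)

/-- The obligations of a translation Φ. -/
inductive Obligation (Φ : Translation T₁ T₂) : Expr → Prop
  | baseOb : ∀ n ∈ T₁.bases, Obligation Φ
      (existsE 0 (Φ.tyTrans (.base n)) ((Φ.muBase n).app (.var 0 (Φ.tyTrans (.base n)))))
  | constOb : ∀ p ∈ T₁.consts, Obligation Φ
      ((Φ.muBar p.2).app (.con (Φ.nuCon p) (Φ.tyTrans p.2)))
  | eqOb : ∀ a : Ty, TyInSets T₁.bases a → Obligation Φ (eqObligation Φ a)
  | iotaOb : ∀ a : Ty, TyInSets T₁.bases a → a ≠ oTy → Obligation Φ (iotaObligation Φ a)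
  | isVarOb : Obligation Φ (synConstObligation Φ .isVar .isVar (epsTy.arr oTy))
  | isConOb : Obligation Φ (synConstObligation Φ .isCon .isCon (epsTy.arr oTy))
  | appOb : Obligation Φ (synConstObligation Φ .appc .appc (epsTy.arr (epsTy.arr epsTy)))
  | absOb : Obligation Φ (synConstObligation Φ .absc .absc (epsTy.arr (epsTy.arr epsTy)))
  | condOb : Obligation Φ
      (synConstObligation Φ .condc .condc (epsTy.arr (epsTy.arr (epsTy.arr epsTy))))
  | quoOb : Obligation Φ (synConstObligation Φ .quo .quo (epsTy.arr epsTy))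
  | subOb : Obligation Φ (synConstObligation Φ .sub .sub (epsTy.arr (epsTy.arr oTy)))
  | isFreeInOb : Obligation Φ (synConstObligation Φ .isFreeIn .isFreeIn (epsTy.arr (epsTy.arr oTy)))
  | isVarAtOb : ∀ b : Ty, TyInSets T₁.bases b → Obligation Φ
      (synConstObligation Φ (.isVarAt b) (.isVarAt (Φ.tyTrans b)) (epsTy.arr oTy))
  | isConAtOb : ∀ b : Ty, TyInSets T₁.bases b → Obligation Φ
      (synConstObligation Φ (.isConAt b) (.isConAt (Φ.tyTrans b)) (epsTy.arr oTy))
  | isExprAtOb : ∀ b : Ty, TyInSets T₁.bases b → Obligation Φ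
      (synConstObligation Φ (.isExprAt b) (.isExprAt (Φ.tyTrans b)) (epsTy.arr oTy))
  | axOb : ∀ A ∈ T₁.axioms, Obligation Φ (Φ.nuBar A)

/-- A semantic morphism from T₁ to T₂. -/
def IsSemMorphism (Φ : Translation T₁ T₂) : Prop :=
  ∀ A : Expr, T₁.InLang A → HasType A oTy → SemClosedExpr A oTy →
    ValidInTheory T₁ A → ValidInTheory T₂ (Φ.nuBar A)

end CTTuqe

namespace CTTuqe

noncomputable section ModelConstruction

attribute [local instance] Classical.propDecidable

abbrev U0 : ℕ → Type := fun _ => PUnit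

def Dm : (a : Ty) → Set (FullDom U0 a)
  | .base _ => Set.univ
  | .arr a b => {f | ∀ x ∈ Dm a, (∀ y, f x = some y → y ∈ Dm b) ∧ (b = oTy → (f x).isSome)}

lemma mem_Dm_base {n : ℕ} (x : FullDom U0 (.base n)) : x ∈ Dm (.base n) := Set.mem_univ x

lemma mem_Dm_arr {a b : Ty} {f : FullDom U0 (a.arr b)} :
    f ∈ Dm (a.arr b) ↔ ∀ x ∈ Dm a, (∀ y, f x = some y → y ∈ Dm b) ∧ (b = oTy → (f x).isSome) :=
  Iff.rfl

def someConstruction : Construction := ⟨E (.con (.user 0) oTy), .con (.user 0) oTy, trivial, rfl⟩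

def dflt : (a : Ty) → FullDom U0 a
  | .base 0 => false
  | .base 1 => someConstruction
  | .base (_+2) => PUnit.unit
  | .arr _ b => fun _ => some (dflt b)

lemma dflt_mem : ∀ a, dflt a ∈ Dm a := by
  intro a
  induction a with
  | base n =>
    match n with
    | 0 => exact Set.mem_univ _
    | 1 => exact Set.mem_univ _
    | (_+2) => exact Set.mem_univ _
  | arr a b iha ihb =>
    rw [mem_Dm_arr]
    intro x hx
    exact ⟨fun y hy => by cases hy; exact ihb, fun _ => rfl⟩

def Fr : Frame U0 where
  dom := Dm
  dom_o := rfl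
  dom_eps := rfl
  dom_ind := fun _ => ⟨PUnit.unit, Set.mem_univ _⟩
  fn_mem := fun a b f hf x hx y hy => ((mem_Dm_arr.1 hf) x hx).1 y hy
  fn_total := fun a f hf x hx => ((mem_Dm_arr.1 hf) x hx).2 rfl

/- Interpretation of constants -/

def IEq : (t : Ty) → FullDom U0 t
  | .arr _ (.arr _ (.base 0)) => fun x => some fun y => some (decide (HEq x y))
  | t => dflt t

def IIota : (t : Ty) → FullDom U0 t
  | .arr (.arr a (.base 0)) a' => fun p =>
      if h : ∃ d ∈ Dm a', (∃ d' : FullDom U0 a, HEq d d' ∧ p d' = some true) ∧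
          ∀ e ∈ Dm a', (∃ d' : FullDom U0 a, HEq e d' ∧ p d' = some true) → e = d
      then some h.choose else fallback U0 a' none
  | t => dflt t

def IIsVar : (t : Ty) → FullDom U0 t
  | .arr (.base 1) (.base 0) => fun A : Construction =>
      some (decide (∃ (n : ℕ) (a : Ty), A.1 = Expr.quot (.var n a)))
  | t => dflt t

def IIsCon : (t : Ty) → FullDom U0 t
  | .arr (.base 1) (.base 0) => fun A : Construction =>
      some (decide (∃ (c : CName) (a : Ty), A.1 = Expr.quot (.con c a)))
  | t => dflt t

def IIsVarAt (a0 : Ty) : (t : Ty) → FullDom U0 t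
  | .arr (.base 1) (.base 0) => fun A : Construction =>
      some (decide (∃ n : ℕ, A.1 = Expr.quot (.var n a0)))
  | t => dflt t

def IIsConAt (a0 : Ty) : (t : Ty) → FullDom U0 t
  | .arr (.base 1) (.base 0) => fun A : Construction =>
      some (decide (∃ c : CName, A.1 = Expr.quot (.con c a0)))
  | t => dflt t

def IIsExprAt (a0 : Ty) : (t : Ty) → FullDom U0 t
  | .arr (.base 1) (.base 0) => fun A : Construction =>
      some (decide (∃ B : Expr, EvalFree B ∧ HasType B a0 ∧ E B = A.1))
  | t => dflt t

def IAppc : (t : Ty) → FullDom U0 t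
  | .arr (.base 1) (.arr (.base 1) (.base 1)) => fun A : Construction =>
      some fun B : Construction =>
        if h : IsConstruction (.app (.app appC A.1) B.1) then some (⟨_, h⟩ : Construction)
        else none
  | t => dflt t

def IAbsc : (t : Ty) → FullDom U0 t
  | .arr (.base 1) (.arr (.base 1) (.base 1)) => fun A : Construction =>
      some fun B : Construction =>
        if h : IsConstruction (.app (.app absC A.1) B.1) then some (⟨_, h⟩ : Construction)
        else none
  | t => dflt t

def ICondc : (t : Ty) → FullDom U0 t
  | .arr (.base 1) (.arr (.base 1) (.arr (.base 1) (.base 1))) => fun A : Construction =>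
      some fun B : Construction => some fun C : Construction =>
        if h : IsConstruction (.app (.app (.app condC A.1) B.1) C.1) then
          some (⟨_, h⟩ : Construction)
        else none
  | t => dflt t

def quoConstr (A : Construction) : Construction :=
  ⟨.app quoC A.1, by
    obtain ⟨A', h1, h2⟩ := A.2
    exact ⟨.quot A', h1, by show Expr.app quoC (E A') = _; rw [h2]⟩⟩

def IQuo : (t : Ty) → FullDom U0 t
  | .arr (.base 1) (.base 1) => fun A : Construction => some (quoConstr A)
  | t => dflt t

def ISub : (t : Ty) → FullDom U0 t
  | .arr (.base 1) (.arr (.base 1) (.base 0)) => fun A : Construction =>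
      some fun B : Construction => some (decide (ProperSub A.1 B.1))
  | t => dflt t

def IFree : (t : Ty) → FullDom U0 t
  | .arr (.base 1) (.arr (.base 1) (.base 0)) => fun A : Construction =>
      some fun B : Construction =>
        some (decide (∃ (n : ℕ) (a : Ty) (C : Expr), EvalFree C ∧ E C = B.1 ∧
          A.1 = Expr.quot (.var n a) ∧ (n, a) ∈ freeVars C))
  | t => dflt t

def Ifn : CName → (t : Ty) → FullDom U0 t
  | .eq => IEq
  | .iota => IIota
  | .isVar => IIsVar
  | .isCon => IIsCon
  | .appc => IAppc
  | .absc => IAbsc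
  | .condc => ICondc
  | .quo => IQuo
  | .sub => ISub
  | .isFreeIn => IFree
  | .isVarAt a => IIsVarAt a
  | .isConAt a => IIsConAt a
  | .isExprAt a => IIsExprAt a
  | .user _ => fun t => dflt t

lemma oTy_ne_eps : (Ty.base 1) ≠ oTy := by simp [oTy]

lemma fallback_eq_of_ne (b : Ty) (hb : b ≠ oTy) (v : Option (FullDom U0 b)) :
    fallback U0 b v = v := by
  match b with
  | .base 0 => exact absurd rfl hb
  | .base (_+1) => rfl
  | .arr _ _ => rfl

lemma mem_Dm_total {a b : Ty} {f : FullDom U0 (a.arr b)}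
    (h : ∀ x ∈ Dm a, ∃ y ∈ Dm b, f x = some y) : f ∈ Dm (a.arr b) := by
  rw [mem_Dm_arr]
  intro x hx
  obtain ⟨y, hy, hxy⟩ := h x hx
  exact ⟨fun z hz => by rw [hxy] at hz; cases hz; exact hy, fun _ => by rw [hxy]; rfl⟩

lemma mem_Dm_partial {a b : Ty} (hb : b ≠ oTy) {f : FullDom U0 (a.arr b)}
    (h : ∀ x ∈ Dm a, ∀ y, f x = some y → y ∈ Dm b) : f ∈ Dm (a.arr b) := by
  rw [mem_Dm_arr]
  intro x hx
  exact ⟨h x hx, fun h' => absurd h' hb⟩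

lemma IEq_mem (t : Ty) : IEq t ∈ Dm t := by
  unfold IEq; split
  · exact mem_Dm_total fun x hx => ⟨_, mem_Dm_total fun y hy => ⟨_, Set.mem_univ _, rfl⟩, rfl⟩
  · rename_i h
    rcases t with n | ⟨a, m | ⟨b, (_ | k) | ⟨c, d⟩⟩⟩
    all_goals first | exact dflt_mem _ | exact (h _ _ rfl).elim

lemma IIota_mem (t : Ty) : IIota t ∈ Dm t := by
  unfold IIota; split
  · rename_i a a'
    rw [mem_Dm_arr]
    intro p hp
    show (∀ y, (if h : ∃ d ∈ Dm a', (∃ d' : FullDom U0 a, HEq d d' ∧ p d' = some true) ∧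
          ∀ e ∈ Dm a', (∃ d' : FullDom U0 a, HEq e d' ∧ p d' = some true) → e = d
        then some h.choose else fallback U0 a' none) = some y → y ∈ Dm a') ∧
      (a' = oTy → (if h : ∃ d ∈ Dm a', (∃ d' : FullDom U0 a, HEq d d' ∧ p d' = some true) ∧
          ∀ e ∈ Dm a', (∃ d' : FullDom U0 a, HEq e d' ∧ p d' = some true) → e = d
        then some h.choose else fallback U0 a' none).isSome)
    by_cases h : ∃ d ∈ Dm a', (∃ d' : FullDom U0 a, HEq d d' ∧ p d' = some true) ∧
        ∀ e ∈ Dm a', (∃ d' : FullDom U0 a, HEq e d' ∧ p d' = some true) → e = d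
    · rw [dif_pos h]
      exact ⟨fun y hy => by cases hy; exact h.choose_spec.1, fun _ => rfl⟩
    · rw [dif_neg h]
      by_cases ho : a' = oTy
      · subst ho
        exact ⟨fun y _ => Set.mem_univ _, fun _ => rfl⟩
      · rw [fallback_eq_of_ne _ ho]
        exact ⟨fun y hy => (by cases hy), fun h2 => absurd h2 ho⟩
  · rename_i h
    rcases t with n | ⟨_ | ⟨a, (_ | k) | c⟩, b⟩
    all_goals first | exact dflt_mem _ | exact (h _ _ rfl).elim

lemma IIsVar_mem (t : Ty) : IIsVar t ∈ Dm t := by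
  unfold IIsVar; split
  · exact mem_Dm_total fun x hx => ⟨_, Set.mem_univ _, rfl⟩
  · rename_i h
    rcases t with n | ⟨(_ | (_ | k)) | ⟨a, b⟩, (_ | k2) | ⟨c, d⟩⟩
    all_goals first | exact dflt_mem _ | exact (h rfl).elim

lemma IIsCon_mem (t : Ty) : IIsCon t ∈ Dm t := by
  unfold IIsCon; split
  · exact mem_Dm_total fun x hx => ⟨_, Set.mem_univ _, rfl⟩
  · rename_i h
    rcases t with n | ⟨(_ | (_ | k)) | ⟨a, b⟩, (_ | k2) | ⟨c, d⟩⟩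
    all_goals first | exact dflt_mem _ | exact (h rfl).elim

lemma IIsVarAt_mem (a0 t : Ty) : IIsVarAt a0 t ∈ Dm t := by
  unfold IIsVarAt; split
  · exact mem_Dm_total fun x hx => ⟨_, Set.mem_univ _, rfl⟩
  · rename_i h
    rcases t with n | ⟨(_ | (_ | k)) | ⟨a, b⟩, (_ | k2) | ⟨c, d⟩⟩
    all_goals first | exact dflt_mem _ | exact (h rfl).elim

lemma IIsConAt_mem (a0 t : Ty) : IIsConAt a0 t ∈ Dm t := by
  unfold IIsConAt; split
  · exact mem_Dm_total fun x hx => ⟨_, Set.mem_univ _, rfl⟩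
  · rename_i h
    rcases t with n | ⟨(_ | (_ | k)) | ⟨a, b⟩, (_ | k2) | ⟨c, d⟩⟩
    all_goals first | exact dflt_mem _ | exact (h rfl).elim

lemma IIsExprAt_mem (a0 t : Ty) : IIsExprAt a0 t ∈ Dm t := by
  unfold IIsExprAt; split
  · exact mem_Dm_total fun x hx => ⟨_, Set.mem_univ _, rfl⟩
  · rename_i h
    rcases t with n | ⟨(_ | (_ | k)) | ⟨a, b⟩, (_ | k2) | ⟨c, d⟩⟩
    all_goals first | exact dflt_mem _ | exact (h rfl).elim

lemma IAppc_mem (t : Ty) : IAppc t ∈ Dm t := by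
  unfold IAppc; split
  · exact mem_Dm_total fun x hx =>
      ⟨_, mem_Dm_partial oTy_ne_eps fun y hy z hz => Set.mem_univ _, rfl⟩
  · rename_i h
    rcases t with n | ⟨(_ | (_ | k)) | ⟨a, b⟩, n2 | ⟨(_ | (_ | k2)) | ⟨c, d⟩, (_ | (_ | k3)) | ⟨e, f⟩⟩⟩
    all_goals first | exact dflt_mem _ | exact (h rfl).elim

lemma IAbsc_mem (t : Ty) : IAbsc t ∈ Dm t := by
  unfold IAbsc; split
  · exact mem_Dm_total fun x hx =>
      ⟨_, mem_Dm_partial oTy_ne_eps fun y hy z hz => Set.mem_univ _, rfl⟩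
  · rename_i h
    rcases t with n | ⟨(_ | (_ | k)) | ⟨a, b⟩, n2 | ⟨(_ | (_ | k2)) | ⟨c, d⟩, (_ | (_ | k3)) | ⟨e, f⟩⟩⟩
    all_goals first | exact dflt_mem _ | exact (h rfl).elim

lemma ICondc_mem (t : Ty) : ICondc t ∈ Dm t := by
  unfold ICondc; split
  · exact mem_Dm_total fun x hx =>
      ⟨_, mem_Dm_total fun y hy =>
        ⟨_, mem_Dm_partial oTy_ne_eps fun z hz w hw => Set.mem_univ _, rfl⟩, rfl⟩
  · rename_i h
    rcases t with n | ⟨(_ | (_ | k)) | ⟨a, b⟩, n2 | ⟨(_ | (_ | k2)) | ⟨c, d⟩, n3 | ⟨(_ | (_ | k3)) | ⟨e, f⟩, (_ | (_ | k4)) | ⟨g, i⟩⟩⟩⟩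
    all_goals first | exact dflt_mem _ | exact (h rfl).elim

lemma IQuo_mem (t : Ty) : IQuo t ∈ Dm t := by
  unfold IQuo; split
  · exact mem_Dm_total fun x hx => ⟨_, Set.mem_univ _, rfl⟩
  · rename_i h
    rcases t with n | ⟨(_ | (_ | k)) | ⟨a, b⟩, (_ | (_ | k2)) | ⟨c, d⟩⟩
    all_goals first | exact dflt_mem _ | exact (h rfl).elim

lemma ISub_mem (t : Ty) : ISub t ∈ Dm t := by
  unfold ISub; split
  · exact mem_Dm_total fun x hx => ⟨_, mem_Dm_total fun y hy => ⟨_, Set.mem_univ _, rfl⟩, rfl⟩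
  · rename_i h
    rcases t with n | ⟨(_ | (_ | k)) | ⟨a, b⟩, n2 | ⟨(_ | (_ | k2)) | ⟨c, d⟩, (_ | k3) | ⟨e, f⟩⟩⟩
    all_goals first | exact dflt_mem _ | exact (h rfl).elim

lemma IFree_mem (t : Ty) : IFree t ∈ Dm t := by
  unfold IFree; split
  · exact mem_Dm_total fun x hx => ⟨_, mem_Dm_total fun y hy => ⟨_, Set.mem_univ _, rfl⟩, rfl⟩
  · rename_i h
    rcases t with n | ⟨(_ | (_ | k)) | ⟨a, b⟩, n2 | ⟨(_ | (_ | k2)) | ⟨c, d⟩, (_ | k3) | ⟨e, f⟩⟩⟩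
    all_goals first | exact dflt_mem _ | exact (h rfl).elim

lemma Ifn_mem (c : CName) (t : Ty) : Ifn c t ∈ Dm t := by
  cases c <;>
    first
      | exact IEq_mem t
      | exact IIota_mem t
      | exact IIsVar_mem t
      | exact IIsCon_mem t
      | exact IAppc_mem t
      | exact IAbsc_mem t
      | exact ICondc_mem t
      | exact IQuo_mem t
      | exact ISub_mem t
      | exact IFree_mem t
      | exact IIsVarAt_mem _ t
      | exact IIsConAt_mem _ t
      | exact IIsExprAt_mem _ t
      | exact dflt_mem t

def Intp : Interp U0 where
  fr := Fr
  I := Ifn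
  I_mem := Ifn_mem
  eq_cond := by
    intro a x hx
    refine ⟨fun y => some (decide (HEq x y)), rfl, ?_⟩
    intro y hy
    exact ⟨decide (HEq x y), rfl, (decide_eq_true_iff).trans heq_iff_eq⟩
  iota_cond := by
    intro a ha p hp
    constructor
    · rintro d hd ⟨hpd, hu⟩
      have hP : ∃ d ∈ Dm a, (∃ d' : FullDom U0 a, HEq d d' ∧ p d' = some true) ∧
          ∀ e ∈ Dm a, (∃ d' : FullDom U0 a, HEq e d' ∧ p d' = some true) → e = d :=
        ⟨d, hd, ⟨d, HEq.rfl, hpd⟩,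
          fun e he h2 => by
            obtain ⟨d', hq, hp'⟩ := h2
            exact hu e he (by rw [eq_of_heq hq]; exact hp')⟩
      show (if h : ∃ d ∈ Dm a, (∃ d' : FullDom U0 a, HEq d d' ∧ p d' = some true) ∧
          ∀ e ∈ Dm a, (∃ d' : FullDom U0 a, HEq e d' ∧ p d' = some true) → e = d
        then some h.choose else fallback U0 a none) = some d
      rw [dif_pos hP]
      obtain ⟨hc1, hc2, _⟩ := hP.choose_spec
      obtain ⟨d', hq, hp'⟩ := hc2
      exact congrArg some (hu _ hc1 (by rw [eq_of_heq hq]; exact hp'))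
    · intro hne
      show (if h : ∃ d ∈ Dm a, (∃ d' : FullDom U0 a, HEq d d' ∧ p d' = some true) ∧
          ∀ e ∈ Dm a, (∃ d' : FullDom U0 a, HEq e d' ∧ p d' = some true) → e = d
        then some h.choose else fallback U0 a none) = none
      rw [dif_neg, fallback_eq_of_ne a ha]
      rintro ⟨d, hd, ⟨d', hq, hp'⟩, hu⟩
      exact hne ⟨d, hd, by rw [eq_of_heq hq]; exact hp',
        fun e he hpe => hu e he ⟨e, HEq.rfl, hpe⟩⟩
  isVar_cond := fun A => ⟨_, rfl, decide_eq_true_iff⟩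
  isVarAt_cond := fun a A => ⟨_, rfl, decide_eq_true_iff⟩
  isCon_cond := fun A => ⟨_, rfl, decide_eq_true_iff⟩
  isConAt_cond := fun a A => ⟨_, rfl, decide_eq_true_iff⟩
  app_cond := by
    intro A B
    constructor
    · constructor
      · rintro ⟨g, C, hg, hgB⟩
        obtain rfl := (Option.some.inj hg).symm
        by_cases h : IsConstruction (.app (.app appC A.1) B.1)
        · exact h
        · simp only [dif_neg h] at hgB; cases hgB
      · intro h
        exact ⟨_, ⟨_, h⟩, rfl, dif_pos h⟩
    · intro g C hg hgB
      obtain rfl := (Option.some.inj hg).symm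
      by_cases h : IsConstruction (.app (.app appC A.1) B.1)
      · simp only [dif_pos h] at hgB; cases hgB; rfl
      · simp only [dif_neg h] at hgB; cases hgB
  abs_cond := by
    intro A B
    constructor
    · constructor
      · rintro ⟨g, C, hg, hgB⟩
        obtain rfl := (Option.some.inj hg).symm
        by_cases h : IsConstruction (.app (.app absC A.1) B.1)
        · exact h
        · simp only [dif_neg h] at hgB; cases hgB
      · intro h
        exact ⟨_, ⟨_, h⟩, rfl, dif_pos h⟩
    · intro g C hg hgB
      obtain rfl := (Option.some.inj hg).symm
      by_cases h : IsConstruction (.app (.app absC A.1) B.1)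
      · simp only [dif_pos h] at hgB; cases hgB; rfl
      · simp only [dif_neg h] at hgB; cases hgB
  cond_cond := by
    intro A B C
    constructor
    · constructor
      · rintro ⟨g, h2, D, hg, hgB, hgC⟩
        obtain rfl := (Option.some.inj hg).symm
        obtain rfl := (Option.some.inj hgB).symm
        by_cases h : IsConstruction (.app (.app (.app condC A.1) B.1) C.1)
        · exact h
        · simp only [dif_neg h] at hgC; cases hgC
      · intro h
        exact ⟨_, _, ⟨_, h⟩, rfl, rfl, dif_pos h⟩
    · intro g h2 D hg hgB hgC
      obtain rfl := (Option.some.inj hg).symm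
      obtain rfl := (Option.some.inj hgB).symm
      by_cases h : IsConstruction (.app (.app (.app condC A.1) B.1) C.1)
      · simp only [dif_pos h] at hgC; cases hgC; rfl
      · simp only [dif_neg h] at hgC; cases hgC
  quo_cond := fun A => ⟨quoConstr A, rfl, rfl⟩
  isExprAt_cond := fun a A => ⟨_, rfl, decide_eq_true_iff⟩
  sub_cond := fun A B => ⟨_, _, rfl, rfl, decide_eq_true_iff⟩
  isFreeIn_cond := fun A B => ⟨_, _, rfl, rfl, decide_eq_true_iff⟩

lemma typeOf_eq {A : Expr} {a : Ty} (h : HasType A a) : typeOf A = a := by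
  induction h with
  | var => rfl
  | con => rfl
  | app hf hx ihf ihx => simp [typeOf, ihf]
  | abs hB ihB => simp [typeOf, ihB]
  | cond hA hB hC ihA ihB ihC => simpa [typeOf] using ihB
  | quot _ _ => rfl
  | eval hA hB ihA ihB => simpa [typeOf] using ihB

lemma E_inj : ∀ A B : Expr, EvalFree A → EvalFree B → E A = E B → A = B := by
  intro A
  induction A with
  | var n a => intro B hA hB h <;> cases B <;> simp_all [E, appC, absC, condC, quoC, EvalFree]
  | con c a => intro B hA hB h <;> cases B <;> simp_all [E, appC, absC, condC, quoC, EvalFree]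
  | app f x ihf ihx =>
    intro B hA hB h
    cases B <;> simp_all [E, appC, absC, condC, quoC, EvalFree]
    exact ⟨ihf _ hB.1 rfl, ihx _ hB.2 rfl⟩
  | abs n a b ihb =>
    intro B hA hB h
    cases B <;> simp_all [E, appC, absC, condC, quoC, EvalFree]
    exact ihb _ hB rfl
  | cond a b c iha ihb ihc =>
    intro B hA hB h
    cases B <;> simp_all [E, appC, absC, condC, quoC, EvalFree]
    exact ⟨iha _ hB.1 rfl, ihb _ hB.2.1 rfl, ihc _ hB.2.2 rfl⟩
  | quot a iha =>
    intro B hA hB h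
    cases B <;> simp_all [E, appC, absC, condC, quoC, EvalFree]
    exact iha _ hB rfl
  | eval a b iha ihb => intro B hA; exact absurd hA id

def V0 (φ : Assn Fr) : Expr → (t : Ty) → Option (FullDom U0 t)
  | .var n b, t =>
    if h : b = t then some (cast (congrArg (FullDom U0) h) (φ.1 n b)) else none
  | .con c b, t =>
    if h : b = t then some (cast (congrArg (FullDom U0) h) (Ifn c b)) else none
  | .app F X, t =>
    fallback U0 t ((V0 φ F ((typeOf X).arr t)).bind fun f =>
      (V0 φ X (typeOf X)).bind fun x => f x)
  | .abs n c B, .arr a b =>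
    if h : c = a ∧ HasType B b ∧ EvalFree B then
      some (fun d => if hd : d ∈ Fr.dom a then V0 (φ.upd n a d hd) B b else none)
    else none
  | .abs _ _ _, .base _ => none
  | .cond A B C, t => (V0 φ A oTy).bind fun tv => bif tv then V0 φ B t else V0 φ C t
  | .quot A, .base 1 => if h : EvalFree A then some (⟨E A, A, h, rfl⟩ : Construction) else none
  | .quot _, _ => none
  | .eval _ _, _ => none

def V1 (φ : Assn Fr) : Expr → (t : Ty) → Option (FullDom U0 t)
  | .var n b, t =>
    if h : b = t then some (cast (congrArg (FullDom U0) h) (φ.1 n b)) else none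
  | .con c b, t =>
    if h : b = t then some (cast (congrArg (FullDom U0) h) (Ifn c b)) else none
  | .app F X, t =>
    fallback U0 t ((V1 φ F ((typeOf X).arr t)).bind fun f =>
      (V1 φ X (typeOf X)).bind fun x => f x)
  | .abs n c B, .arr a b =>
    if h : c = a ∧ HasType B b then
      some (fun d => if hd : d ∈ Fr.dom a then V1 (φ.upd n a d hd) B b else none)
    else none
  | .abs _ _ _, .base _ => none
  | .cond A B C, t => (V1 φ A oTy).bind fun tv => bif tv then V1 φ B t else V1 φ C t
  | .quot A, .base 1 => if h : EvalFree A then some (⟨E A, A, h, rfl⟩ : Construction) else none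
  | .quot _, _ => none
  | .eval A _, t =>
    match V1 φ A epsTy with
    | some C =>
      if h : ∃ D : Expr, EvalFree D ∧ HasType D t ∧ E D = (C : Construction).1 then
        V0 φ h.choose t
      else fallback U0 t none
    | none => fallback U0 t none

lemma arr_ne_o (a b : Ty) : Ty.arr a b ≠ oTy := by simp [oTy]

lemma V0_total_o : ∀ (A : Expr), EvalFree A → HasType A oTy → ∀ φ : Assn Fr,
    (V0 φ A oTy).isSome := by
  intro A
  induction A with
  | var n b =>
    intro _ hT φ
    cases hT
    exact Option.isSome_iff_exists.2 ⟨_, dif_pos rfl⟩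
  | con c b =>
    intro _ hT φ
    cases hT
    exact Option.isSome_iff_exists.2 ⟨_, dif_pos rfl⟩
  | app F X ihF ihX => intro _ _ φ; exact rfl
  | abs n c B ihB => intro _ hT φ; cases hT
  | cond A B C ihA ihB ihC =>
    intro hE hT φ
    cases hT with
    | cond hA hB hC =>
      obtain ⟨v, hv⟩ := Option.isSome_iff_exists.1 (ihA hE.1 hA φ)
      show ((V0 φ A oTy).bind fun tv => bif tv then V0 φ B oTy else V0 φ C oTy).isSome
      rw [hv, Option.bind_some]
      cases v
      · exact ihC hE.2.2 hC φ
      · exact ihB hE.2.1 hB φ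
  | quot A ihA => intro _ hT φ; cases hT
  | eval A B ihA ihB => intro hE; exact absurd hE id

lemma V0_mem : ∀ (A : Expr) (φ : Assn Fr) (t : Ty) (y : FullDom U0 t),
    V0 φ A t = some y → y ∈ Dm t := by
  intro A
  induction A with
  | var n b =>
    intro φ t y hy
    unfold V0 at hy
    split at hy
    · rename_i h; subst h; cases hy; exact φ.2 n b
    · cases hy
  | con c b =>
    intro φ t y hy
    unfold V0 at hy
    split at hy
    · rename_i h; subst h; cases hy; exact Ifn_mem c b
    · cases hy
  | app F X ihF ihX =>
    intro φ t y hy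
    cases t with
    | base n => exact Set.mem_univ y
    | arr a b =>
      unfold V0 at hy
      rw [fallback_eq_of_ne _ (arr_ne_o a b)] at hy
      obtain ⟨f, hf, hy2⟩ := Option.bind_eq_some_iff.1 hy
      obtain ⟨x, hx, hfx⟩ := Option.bind_eq_some_iff.1 hy2
      exact ((mem_Dm_arr.1 (ihF φ _ f hf)) x (ihX φ _ x hx)).1 y hfx
  | abs n c B ihB =>
    intro φ t y hy
    cases t with
    | base m => cases hy
    | arr a b =>
      unfold V0 at hy
      split at hy
      · rename_i h
        cases hy
        apply mem_Dm_arr.2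
        intro x hx
        constructor
        · intro z hz
          simp only [dif_pos (show _ ∈ Fr.dom _ from hx)] at hz
          exact ihB _ _ _ hz
        · rintro rfl
          simp only [dif_pos (show _ ∈ Fr.dom _ from hx)]
          exact V0_total_o B h.2.2 h.2.1 _
      · cases hy
  | cond A B C ihA ihB ihC =>
    intro φ t y hy
    unfold V0 at hy
    obtain ⟨tv, htv, h2⟩ := Option.bind_eq_some_iff.1 hy
    cases tv
    · exact ihC φ t y h2
    · exact ihB φ t y h2
  | quot A ihA =>
    intro φ t y hy
    cases t with
    | base m => exact Set.mem_univ y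
    | arr a b => cases hy
  | eval A B ihA ihB => intro φ t y hy; cases hy

lemma V0_eq_V1 : ∀ (A : Expr), EvalFree A → ∀ (φ : Assn Fr) (t : Ty), V0 φ A t = V1 φ A t := by
  intro A
  induction A with
  | var n b => intro _ φ t; rfl
  | con c b => intro _ φ t; rfl
  | app F X ihF ihX =>
    intro hE φ t
    simp only [V0, V1, ihF hE.1, ihX hE.2]
  | abs n c B ihB =>
    intro hE φ t
    cases t with
    | base m => rfl
    | arr a b =>
      show (if h : c = a ∧ HasType B b ∧ EvalFree B then _ else _) =
        (if h : c = a ∧ HasType B b then _ else _)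
      by_cases h : c = a ∧ HasType B b
      · rw [dif_pos ⟨h.1, h.2, hE⟩, dif_pos h]
        congr 1
        funext d
        by_cases hd : d ∈ Fr.dom a
        · simp only [dif_pos hd, ihB hE]
        · simp only [dif_neg hd]
      · rw [dif_neg (fun h' => h ⟨h'.1, h'.2.1⟩), dif_neg h]
  | cond A B C ihA ihB ihC =>
    intro hE φ t
    simp only [V0, V1, ihA hE.1, ihB hE.2.1, ihC hE.2.2]
  | quot A ihA =>
    intro _ φ t
    match t with
    | .base 0 => rfl
    | .base 1 => rfl
    | .base (_+2) => rfl
    | .arr _ _ => rfl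
  | eval A B _ _ => intro hE; exact absurd hE id

lemma V1_total_o : ∀ (A : Expr), HasType A oTy → ∀ φ : Assn Fr, (V1 φ A oTy).isSome := by
  intro A
  induction A with
  | var n b => intro hT φ; cases hT; exact Option.isSome_iff_exists.2 ⟨_, dif_pos rfl⟩
  | con c b => intro hT φ; cases hT; exact Option.isSome_iff_exists.2 ⟨_, dif_pos rfl⟩
  | app F X ihF ihX => intro _ φ; exact rfl
  | abs n c B ihB => intro hT φ; cases hT
  | cond A B C ihA ihB ihC =>
    intro hT φ
    cases hT with
    | cond hA hB hC =>
      obtain ⟨v, hv⟩ := Option.isSome_iff_exists.1 (ihA hA φ)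
      show ((V1 φ A oTy).bind fun tv => bif tv then V1 φ B oTy else V1 φ C oTy).isSome
      rw [hv, Option.bind_some]
      cases v
      · exact ihC hC φ
      · exact ihB hB φ
  | quot A ihA => intro hT φ; cases hT
  | eval A B ihA ihB =>
    intro hT φ
    show (match V1 φ A epsTy with
      | some C =>
        if h : ∃ D : Expr, EvalFree D ∧ HasType D oTy ∧ E D = (C : Construction).1 then
          V0 φ h.choose oTy
        else fallback U0 oTy none
      | none => fallback U0 oTy none).isSome
    rcases hC : V1 φ A epsTy with _ | C
    · exact rfl
    · show (if h : ∃ D : Expr, EvalFree D ∧ HasType D oTy ∧ E D = (C : Construction).1 then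
          V0 φ h.choose oTy else fallback U0 oTy none).isSome
      by_cases h : ∃ D : Expr, EvalFree D ∧ HasType D oTy ∧ E D = (C : Construction).1
      · rw [dif_pos h]
        obtain ⟨h1, h2, _⟩ := h.choose_spec
        exact V0_total_o _ h1 h2 φ
      · rw [dif_neg h]; exact rfl

lemma V1_mem : ∀ (A : Expr) (φ : Assn Fr) (t : Ty) (y : FullDom U0 t),
    V1 φ A t = some y → y ∈ Dm t := by
  intro A
  induction A with
  | var n b =>
    intro φ t y hy
    unfold V1 at hy
    split at hy
    · rename_i h; subst h; cases hy; exact φ.2 n b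
    · cases hy
  | con c b =>
    intro φ t y hy
    unfold V1 at hy
    split at hy
    · rename_i h; subst h; cases hy; exact Ifn_mem c b
    · cases hy
  | app F X ihF ihX =>
    intro φ t y hy
    cases t with
    | base n => exact Set.mem_univ y
    | arr a b =>
      unfold V1 at hy
      rw [fallback_eq_of_ne _ (arr_ne_o a b)] at hy
      obtain ⟨f, hf, hy2⟩ := Option.bind_eq_some_iff.1 hy
      obtain ⟨x, hx, hfx⟩ := Option.bind_eq_some_iff.1 hy2
      exact ((mem_Dm_arr.1 (ihF φ _ f hf)) x (ihX φ _ x hx)).1 y hfx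
  | abs n c B ihB =>
    intro φ t y hy
    cases t with
    | base m => cases hy
    | arr a b =>
      unfold V1 at hy
      split at hy
      · rename_i h
        cases hy
        apply mem_Dm_arr.2
        intro x hx
        constructor
        · intro z hz
          simp only [dif_pos (show _ ∈ Fr.dom _ from hx)] at hz
          exact ihB _ _ _ hz
        · rintro rfl
          simp only [dif_pos (show _ ∈ Fr.dom _ from hx)]
          exact V1_total_o B h.2 _
      · cases hy
  | cond A B C ihA ihB ihC =>
    intro φ t y hy
    unfold V1 at hy
    obtain ⟨tv, htv, h2⟩ := Option.bind_eq_some_iff.1 hy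
    cases tv
    · exact ihC φ t y h2
    · exact ihB φ t y h2
  | quot A ihA =>
    intro φ t y hy
    cases t with
    | base m => exact Set.mem_univ y
    | arr a b => cases hy
  | eval A B ihA ihB =>
    intro φ t y hy
    cases t with
    | base n => exact Set.mem_univ y
    | arr a b =>
      unfold V1 at hy
      rcases hC : V1 φ A epsTy with _ | C <;> simp only [hC] at hy
      · rw [fallback_eq_of_ne _ (arr_ne_o a b)] at hy; cases hy
      · split at hy
        · exact V0_mem _ φ _ y hy
        · rw [fallback_eq_of_ne _ (arr_ne_o a b)] at hy; cases hy

def Model : GeneralModel U0 where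
  intp := Intp
  V := V1
  V_mem := fun φ A a y h => V1_mem A φ a y h
  v_var := fun φ n a => dif_pos rfl
  v_con := fun φ c a => dif_pos rfl
  v_app := by
    intro φ F X a b hF hX
    have hX' := typeOf_eq hX
    show fallback U0 b ((V1 φ F ((typeOf X).arr b)).bind fun f =>
      (V1 φ X (typeOf X)).bind fun x => f x) = _
    rw [hX']
  v_abs := by
    intro φ n a B b hB
    exact ⟨fun d => if hd : d ∈ Fr.dom a then V1 (φ.upd n a d hd) B b else none,
      dif_pos ⟨rfl, hB⟩, fun d hd => dif_pos hd⟩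
  v_cond := fun φ A B C a _ _ _ => rfl
  v_quot := fun φ A h => dif_pos h
  v_eval_pos := by
    intro φ A B b C D hD hTD hA hED
    have hw : ∃ D : Expr, EvalFree D ∧ HasType D b ∧ E D = C.1 := ⟨D, hD, hTD, hED⟩
    show (match V1 φ A epsTy with
      | some C =>
        if h : ∃ D : Expr, EvalFree D ∧ HasType D b ∧ E D = (C : Construction).1 then
          V0 φ h.choose b
        else fallback U0 b none
      | none => fallback U0 b none) = V1 φ D b
    rw [hA]
    show (if h : ∃ D : Expr, EvalFree D ∧ HasType D b ∧ E D = C.1 then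
        V0 φ h.choose b else fallback U0 b none) = V1 φ D b
    rw [dif_pos hw]
    obtain ⟨h1, h2, h3⟩ := hw.choose_spec
    rw [E_inj _ _ h1 hD (h3.trans hED.symm)]
    exact V0_eq_V1 D hD φ b
  v_eval_neg := by
    intro φ A B b hne
    show (match V1 φ A epsTy with
      | some C =>
        if h : ∃ D : Expr, EvalFree D ∧ HasType D b ∧ E D = (C : Construction).1 then
          V0 φ h.choose b
        else fallback U0 b none
      | none => fallback U0 b none) = fallback U0 b none
    rcases hA : V1 φ A epsTy with _ | C
    · rfl
    · show (if h : ∃ D : Expr, EvalFree D ∧ HasType D b ∧ E D = C.1 then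
        V0 φ h.choose b else fallback U0 b none) = fallback U0 b none
      rw [dif_neg]
      rintro ⟨D, h1, h2, h3⟩
      exact hne ⟨C, D, h1, h2, hA, h3⟩

end ModelConstruction

end CTTuqe

namespace CTTuqe

/-- General models for CTT_uqe exist: there is a frame and interpretation
satisfying the thirteen interpretation conditions on the logical constants together with
the seven valuation clauses of a general model. -/
theorem general_models_exist : ∃ U : ℕ → Type, Nonempty (GeneralModel U) :=
  ⟨U0, ⟨Model⟩⟩

end CTTuqe
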